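/- Let X be a locally compact Hausdorff space and let α : C₀(X) → C₀(X) be a *-homomorphism, where C₀(X) is the C*-algebra of continuous complex-valued functions on X vanishing at infinity. Then there exist an open subset Δ ⊆ X and a continuous proper map φ : Δ → X such that for every a ∈ C₀(X): α(a)(x) = a(φ(x)) for all x ∈ Δ, and α(a)(x) = 0 for all x ∉ Δ. -/

import Mathlib

open scoped ZeroAtInfty Classical

open Filter Set

set_option maxHeartbeats 2000000

section Aux

variable {X : Type*} [TopologicalSpace X] [LocallyCompactSpace X] [T2Space X]

lemma exists_bump' {K U : Set X} (hK : IsCompact K) (hU : IsOpen U) (hKU : K ⊆ U) :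
    ∃ a : C₀(X, ℂ), (∀ x ∈ K, a x = 1) ∧ ∀ x, x ∉ U → a x = 0 := by
  obtain ⟨f, hf1, hf0, hfc, -⟩ := exists_continuous_one_zero_of_isCompact
    hK hU.isClosed_compl (disjoint_compl_right_iff_subset.mpr hKU)
  refine ⟨⟨⟨fun x => (f x : ℂ), by fun_prop⟩, ?_⟩, ?_, ?_⟩
  · have h0 : Tendsto f (cocompact X) (nhds 0) := hfc.is_zero_at_infty
    have := (Complex.continuous_ofReal.tendsto 0).comp h0
    simpa [Function.comp_def] using this
  · intro x hx; simpa using hf1 hx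
  · intro x hx; simpa using hf0 hx

lemma isCompact_norm_ge (f : C₀(X, ℂ)) {ε : ℝ} (hε : 0 < ε) :
    IsCompact {x | ε ≤ ‖f x‖} := by
  have h0 : Tendsto f (cocompact X) (nhds 0) := zero_at_infty f
  have hmem : {x : X | ‖f x‖ < ε} ∈ cocompact X := by
    have : Metric.ball (0 : ℂ) ε ∈ nhds (0 : ℂ) := Metric.ball_mem_nhds _ hε
    have := h0 this
    have heq : ⇑f ⁻¹' Metric.ball 0 ε = {x : X | ‖f x‖ < ε} := by
      ext x; simp [Metric.mem_ball, dist_zero_right]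
    rw [← heq]; exact this
  rw [mem_cocompact] at hmem
  obtain ⟨t, ht, hts⟩ := hmem
  refine ht.of_isClosed_subset ?_ ?_
  · have : Continuous fun x => ‖f x‖ := (map_continuous f).norm
    exact isClosed_le continuous_const this
  · intro x hx
    by_contra hxt
    exact absurd (hts hxt) (by simpa using hx)

/-- Evaluation at a point as a star homomorphism. -/
noncomputable def evalHom (x : X) : C₀(X, ℂ) →⋆ₙₐ[ℂ] ℂ where
  toFun a := a x
  map_smul' _ _ := rfl
  map_zero' := rfl
  map_add' _ _ := rfl
  map_mul' _ _ := rfl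
  map_star' _ := rfl

@[simp] lemma evalHom_apply (x : X) (a : C₀(X, ℂ)) : evalHom x a = a x := rfl

lemma char_eval (χ : C₀(X, ℂ) →⋆ₙₐ[ℂ] ℂ) (a₀ : C₀(X, ℂ)) (ha₀ : χ a₀ ≠ 0) :
    ∃ y : X, ∀ a, χ a = a y := by
  by_contra hcon
  push_neg at hcon
  -- normalize
  set b : C₀(X, ℂ) := (χ a₀)⁻¹ • a₀ with hbdef
  have hb : χ b = 1 := by
    simp [hbdef, map_smul, inv_mul_cancel₀ ha₀]
  set h : C₀(X, ℂ) := b * star b with hhdef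
  have hχh : χ h = 1 := by
    simp [hhdef, map_mul, map_star, hb]
  set H : X → ℝ := fun x => ‖b x‖ ^ 2 with hHdef
  have hHcont : Continuous H := by fun_prop
  have hhx : ∀ x, h x = (H x : ℂ) := by
    intro x
    simp only [hhdef, hHdef]
    rw [show (b * star b) x = b x * star (b x) from rfl]
    rw [Complex.star_def, Complex.mul_conj]
    norm_cast
    exact (Complex.normSq_eq_norm_sq _).trans rfl
  set K : Set X := {x | 1/2 ≤ ‖b x‖} with hKdef
  have hKcomp : IsCompact K := isCompact_norm_ge b (by norm_num)
  -- for each point a function in ker χ not vanishing there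
  have key : ∀ y : X, ∃ f : C₀(X, ℂ), χ f = 0 ∧ f y ≠ 0 := by
    intro y
    obtain ⟨a, ha⟩ := hcon y
    by_cases h1 : a y - χ a * b y ≠ 0
    · refine ⟨a - χ a • b, by simp [map_sub, map_smul, hb], ?_⟩
      have hv : (a - χ a • b) y = a y - χ a * b y := by
        simp [smul_eq_mul]
      rw [hv]; exact h1
    · push_neg at h1
      by_cases h2 : b y - b y * b y ≠ 0
      · refine ⟨b - b * b, by simp [map_sub, map_mul, hb], ?_⟩
        have hv : (b - b * b) y = b y - b y * b y := by simp
        rw [hv]; exact h2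
      · push_neg at h2
        have hbor : b y = 0 ∨ b y = 1 := by
          have hz : b y * (1 - b y) = 0 := by linear_combination h2
          rcases mul_eq_zero.mp hz with h | h
          · exact Or.inl h
          · exact Or.inr (by linear_combination -h)
        rcases hbor with hb0 | hb1
        · obtain ⟨c, hc1, -⟩ := exists_bump' (isCompact_singleton (x := y))
            isOpen_univ (subset_univ _)
          refine ⟨c - χ c • b, by simp [map_sub, map_smul, hb], ?_⟩
          have hv : (c - χ c • b) y = c y - χ c * b y := by
            simp [smul_eq_mul]
          rw [hv, hc1 y (mem_singleton y), hb0]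
          simp
        · refine absurd ?_ ha
          have h1' : a y = χ a * b y := by linear_combination h1
          rw [h1', hb1, mul_one]
  choose f hf0 hfne using key
  -- finite subcover
  have hcov : K ⊆ ⋃ y : X, {x | f y x ≠ 0} := fun x _ =>
    mem_iUnion.mpr ⟨x, hfne x⟩
  obtain ⟨t, ht⟩ := hKcomp.elim_finite_subcover (fun y => {x | f y x ≠ 0})
    (fun y => (isClosed_singleton.isOpen_compl).preimage (map_continuous (f y))) hcov
  set g : C₀(X, ℂ) := ∑ y ∈ t, f y * star (f y) with hgdef
  have hχg : χ g = 0 := by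
    simp [hgdef, map_sum, map_mul, map_star, hf0]
  set G : X → ℝ := fun x => ∑ y ∈ t, ‖f y x‖ ^ 2 with hGdef
  have hGcont : Continuous G := by fun_prop
  have hgx : ∀ x, g x = (G x : ℂ) := by
    intro x
    simp only [hgdef, hGdef]
    rw [show (∑ y ∈ t, f y * star (f y)) x = ∑ y ∈ t, (f y x * star (f y x)) by
      rw [← evalHom_apply x, map_sum]; rfl]
    push_cast
    refine Finset.sum_congr rfl fun y _ => ?_
    rw [Complex.star_def, Complex.mul_conj]
    norm_cast
    exact (Complex.normSq_eq_norm_sq _).trans rfl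
  have hGpos : ∀ x ∈ K, 0 < G x := by
    intro x hx
    obtain ⟨y, hyt, hy⟩ := by simpa using ht hx
    exact Finset.sum_pos' (fun i _ => by positivity)
      ⟨y, hyt, pow_pos (norm_pos_iff.mpr hy) 2⟩
  have hGnonneg : ∀ x, 0 ≤ G x := fun x => Finset.sum_nonneg fun i _ => by positivity
  obtain ⟨δ, hδ0, hδ⟩ : ∃ δ > 0, ∀ x ∈ K, δ ≤ G x := by
    rcases K.eq_empty_or_nonempty with hKe | hKne
    · exact ⟨1, one_pos, by simp [hKe]⟩
    · obtain ⟨x₀, hx₀K, hmin⟩ := hKcomp.exists_isMinOn hKne hGcont.continuousOn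
      exact ⟨G x₀, hGpos x₀ hx₀K, fun x hx => hmin hx⟩
  set M : ℝ := ‖b‖ ^ 2 with hMdef
  have hHM : ∀ x, H x ≤ M := by
    intro x
    have : ‖b x‖ ≤ ‖b‖ := by
      rw [← ZeroAtInftyContinuousMap.norm_toBCF_eq_norm]
      exact BoundedContinuousFunction.norm_coe_le_norm b.toBCF x
    exact pow_le_pow_left₀ (norm_nonneg _) this 2
  have hM0 : 0 ≤ M := by positivity
  set d : C₀(X, ℂ) := ((1/4 : ℝ) : ℂ) • h + ((M/δ : ℝ) : ℂ) • (g * h) - h * h with hddef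
  set D : X → ℝ := fun x => (1/4) * H x + (M/δ) * (G x * H x) - H x * H x with hDdef
  have hdx : ∀ x, d x = (D x : ℂ) := by
    intro x
    have : d x = ((1/4 : ℝ) : ℂ) * h x + ((M/δ : ℝ) : ℂ) * (g x * h x) - h x * h x := by
      simp [hddef]
    rw [this, hhx, hgx]
    simp only [hDdef]
    push_cast
    ring
  have hDnonneg : ∀ x, 0 ≤ D x := by
    intro x
    have hH0 : 0 ≤ H x := by positivity
    by_cases hx : x ∈ K
    · have h1 : δ ≤ G x := hδ x hx
      have h2 : H x ≤ M := hHM x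
      have h3 : 0 ≤ G x := hGnonneg x
      simp only [hDdef]
      have e1 : M / δ * δ = M := div_mul_cancel₀ M hδ0.ne'
      have e2 : 0 ≤ M / δ := div_nonneg hM0 hδ0.le
      have A : H x * H x ≤ M * H x := mul_le_mul_of_nonneg_right h2 hH0
      have B : M / δ * (δ * H x) ≤ M / δ * (G x * H x) :=
        mul_le_mul_of_nonneg_left (mul_le_mul_of_nonneg_right h1 hH0) e2
      have C : M / δ * (δ * H x) = M * H x := by rw [← mul_assoc, e1]
      have hq : 0 ≤ 1/4 * H x := by positivity
      linarith
    · have hxK : ‖b x‖ < 1/2 := by simpa [hKdef] using hx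
      have hH4 : H x ≤ 1/4 := by
        show ‖b x‖ ^ 2 ≤ 1/4
        nlinarith [norm_nonneg (b x)]
      have h3 : 0 ≤ G x := hGnonneg x
      simp only [hDdef]
      have e2 : 0 ≤ M / δ := div_nonneg hM0 hδ0.le
      have A : H x * H x ≤ 1/4 * H x := by nlinarith
      have B : 0 ≤ M / δ * (G x * H x) := mul_nonneg e2 (mul_nonneg h3 hH0)
      linarith
  have hχd : χ d = ((-3/4 : ℝ) : ℂ) := by
    have h1 : χ (h * h) = 1 := by rw [map_mul, hχh, one_mul]
    have h2 : χ (g * h) = 0 := by rw [map_mul, hχg, zero_mul]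
    rw [hddef, map_sub, map_add, map_smul, map_smul, h1, h2]
    norm_num [smul_eq_mul, hχh]
  -- square root
  set s : C₀(X, ℂ) := ⟨⟨fun x => (Real.sqrt ((d x).re) : ℂ), by fun_prop⟩, by
    have h0 : Tendsto d (cocompact X) (nhds 0) := zero_at_infty d
    have hc : Continuous fun z : ℂ => (Real.sqrt z.re : ℂ) := by fun_prop
    have := (hc.tendsto 0).comp h0
    simpa [Function.comp_def] using this⟩ with hsdef
  have hssd : s * star s = d := by
    ext x
    have hre : (d x).re = D x := by rw [hdx]; simp
    rw [show (s * star s) x = s x * star (s x) from rfl]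
    simp only [hsdef, ZeroAtInftyContinuousMap.coe_mk]
    rw [Complex.star_def]
    show ((Real.sqrt ((d x).re) : ℂ)) * (starRingEnd ℂ) ((Real.sqrt ((d x).re) : ℂ)) = d x
    rw [Complex.conj_ofReal, ← Complex.ofReal_mul,
      Real.mul_self_sqrt (by rw [hre]; exact hDnonneg x), hre, hdx]
  have : χ d = ((Complex.normSq (χ s) : ℝ) : ℂ) := by
    rw [← hssd, map_mul, map_star, Complex.star_def, Complex.mul_conj]
  rw [hχd] at this
  have hre := congrArg Complex.re this
  simp at hre
  nlinarith [Complex.normSq_nonneg (χ s), hre]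

end Aux

/-- Every *-homomorphism `α` of `C₀(X)` (`X` locally compact Hausdorff)
is of the form `α(a)(x) = a(φ(x))` for `x ∈ Δ` and `α(a)(x) = 0` for `x ∉ Δ`, for some
continuous proper map `φ : Δ → X` defined on an open subset `Δ ⊆ X`. -/
theorem stmt16 {X : Type*} [TopologicalSpace X] [LocallyCompactSpace X] [T2Space X]
    (α : C₀(X, ℂ) →⋆ₙₐ[ℂ] C₀(X, ℂ)) :
    ∃ Δ : Set X, IsOpen Δ ∧ ∃ φ : Δ → X, Continuous φ ∧
      (∀ K : Set X, IsCompact K → IsCompact (φ ⁻¹' K)) ∧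
      ∀ (a : C₀(X, ℂ)) (x : X),
        α a x = if h : x ∈ Δ then a (φ ⟨x, h⟩) else 0 := by
  set Δ : Set X := {x | ∃ a : C₀(X, ℂ), α a x ≠ 0} with hΔdef
  have hΔopen : IsOpen Δ := by
    have : Δ = ⋃ a : C₀(X, ℂ), {x | α a x ≠ 0} := by
      ext x; simp [hΔdef]
    rw [this]
    exact isOpen_iUnion fun a =>
      (isClosed_singleton.isOpen_compl).preimage (map_continuous (α a))
  -- characters
  have hchar : ∀ x : Δ, ∃ y : X, ∀ a : C₀(X, ℂ), α a x.1 = a y := by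
    intro x
    obtain ⟨a₀, ha₀⟩ := x.2
    exact char_eval ((evalHom x.1).comp α) a₀ ha₀
  choose φ hφ using hchar
  refine ⟨Δ, hΔopen, φ, ?_, ?_, ?_⟩
  · -- continuity
    rw [continuous_iff_continuousAt]
    intro x
    rw [ContinuousAt, tendsto_nhds]
    intro V hVopen hVmem
    obtain ⟨a, ha1, ha0⟩ := exists_bump' (isCompact_singleton (x := φ x)) hVopen
      (singleton_subset_iff.mpr hVmem)
    have hαx : α a x.1 = 1 := by rw [hφ x a, ha1 (φ x) (mem_singleton _)]
    have hWopen : IsOpen {z : X | α a z ≠ 0} :=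
      (isClosed_singleton.isOpen_compl).preimage (map_continuous (α a))
    have hmem : (Subtype.val ⁻¹' {z : X | α a z ≠ 0} : Set Δ) ∈ nhds x := by
      refine (hWopen.preimage continuous_subtype_val).mem_nhds ?_
      show α a x.1 ≠ 0
      rw [hαx]; exact one_ne_zero
    refine Filter.mem_of_superset hmem ?_
    intro z hz
    have : a (φ z) ≠ 0 := by rw [← hφ z a]; exact hz
    by_contra hzV
    exact this (ha0 (φ z) hzV)
  · -- properness
    intro K hK
    rw [Subtype.isCompact_iff]
    set S : Set X := Subtype.val '' (φ ⁻¹' K) with hSdef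
    obtain ⟨a, ha1, -⟩ := exists_bump' hK isOpen_univ (subset_univ _)
    have hSsub : ∀ z ∈ S, α a z = 1 := by
      rintro z ⟨w, hwK, rfl⟩
      rw [hφ w a]
      exact ha1 (φ w) hwK
    have hclosed : IsClosed S := by
      rw [← closure_eq_iff_isClosed]
      refine Subset.antisymm ?_ subset_closure
      intro x hx
      have hx1 : α a x = 1 := by
        have hsub : closure S ⊆ (α a) ⁻¹' {1} :=
          closure_minimal (fun z hz => hSsub z hz)
            ((isClosed_singleton).preimage (map_continuous (α a)))
        exact hsub hx
      have hxΔ : x ∈ Δ := ⟨a, by rw [hx1]; exact one_ne_zero⟩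
      have hφK : φ ⟨x, hxΔ⟩ ∈ K := by
        by_contra hnot
        obtain ⟨c, hc1, hc0⟩ := exists_bump' (isCompact_singleton (x := φ ⟨x, hxΔ⟩))
          hK.isClosed.isOpen_compl (singleton_subset_iff.mpr hnot)
        have hzero : ∀ z ∈ S, α c z = 0 := by
          rintro z ⟨w, hwK, rfl⟩
          rw [hφ w c]
          exact hc0 (φ w) (by simpa using hwK)
        have : α c x = 0 := by
          have hsub : closure S ⊆ (α c) ⁻¹' {0} :=
            closure_minimal (fun z hz => hzero z hz)
              ((isClosed_singleton).preimage (map_continuous (α c)))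
          exact hsub hx
        rw [hφ ⟨x, hxΔ⟩ c, hc1 _ (mem_singleton _)] at this
        exact one_ne_zero this
      exact ⟨⟨x, hxΔ⟩, hφK, rfl⟩
    have hsub2 : S ⊆ {z | 1 ≤ ‖α a z‖} := by
      intro z hz
      rw [mem_setOf_eq, hSsub z hz]
      norm_num
    exact (isCompact_norm_ge (α a) one_pos).of_isClosed_subset hclosed hsub2
  · -- the formula
    intro a x
    by_cases hx : x ∈ Δ
    · rw [dif_pos hx]
      exact hφ ⟨x, hx⟩ a
    · rw [dif_neg hx]
      simp only [hΔdef, mem_setOf_eq, not_exists, not_not] at hx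
      exact hx a
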